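/- Run the following post-processing on p ∈ [0,1]^n with intervals ordered by increasing upper bound u: for each b from lowest to highest u with p_b > 0, and for each a from highest u down to b+1 with ℓ_a > u_b and p_a < 1, transfer d = min{p_b, 1 − p_a} from p_b to p_a. Upon termination, for every pair (a, b) with ℓ_a > u_b, either p_a = 1 or p_b = 0; moreover the total ∑p is preserved and all coordinates remain in [0,1]. -/

import Mathlib

/-- One step of the post-processing: for a fixed lower item `b`, if `a` comes after `b`
and interval `a` strictly dominates interval `b`, transfer `d = min (q b) (1 - q a)`
from `q b` to `q a` (a no-op in value when `q b = 0` or `q a = 1`). -/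
noncomputable def ppStep (n : ℕ) (l u : Fin n → ℝ) (b : Fin n)
    (q : Fin n → ℝ) (a : Fin n) : Fin n → ℝ :=
  if b < a ∧ l a > u b then
    Function.update (Function.update q b (q b - min (q b) (1 - q a))) a
      (q a + min (q b) (1 - q a))
  else q

/-- The full post-processing of Algorithm "Post-Processing of p for Ex Post Validity":
for each `b` in increasing order (intervals indexed by increasing upper bound), sweep
`a` from the highest index down to `b+1`, transferring mass to dominating intervals. -/
noncomputable def postprocess (n : ℕ) (l u : Fin n → ℝ) (p : Fin n → ℝ) : Fin n → ℝ :=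
  (List.finRange n).foldl
    (fun q b => (List.finRange n).reverse.foldl (ppStep n l u b) q) p

section Aux

variable {n : ℕ} {l u : Fin n → ℝ}

/-- all coordinates in `[0,1]` -/
def PPBdd (q : Fin n → ℝ) : Prop := ∀ i, 0 ≤ q i ∧ q i ≤ 1

/-- the ex post validity property relative to a fixed lower index `b` -/
def PPGood (l u : Fin n → ℝ) (q : Fin n → ℝ) (b : Fin n) : Prop :=
  ∀ a, b < a → l a > u b → q a = 1 ∨ q b = 0

lemma ppStep_bdd {b a : Fin n} {q : Fin n → ℝ} (hq : PPBdd q) :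
    PPBdd (ppStep n l u b q a) := by
  unfold ppStep
  split
  case isTrue h =>
    intro i
    have hd0 : 0 ≤ min (q b) (1 - q a) := le_min (hq b).1 (by linarith [(hq a).2])
    have hba : b ≠ a := ne_of_lt h.1
    rcases eq_or_ne i a with rfl | hia
    · rw [Function.update_self]
      exact ⟨by linarith [(hq i).1], by linarith [min_le_right (q b) (1 - q i)]⟩
    · rw [Function.update_of_ne hia]
      rcases eq_or_ne i b with rfl | hib
      · rw [Function.update_self]
        exact ⟨by linarith [min_le_left (q i) (1 - q a)], by linarith [(hq i).2]⟩
      · rw [Function.update_of_ne hib]; exact hq i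
  case isFalse => exact hq

lemma ppStep_sum {b a : Fin n} {q : Fin n → ℝ} :
    ∑ i, ppStep n l u b q a i = ∑ i, q i := by
  unfold ppStep
  split
  case isTrue h =>
    have hba : b ≠ a := ne_of_lt h.1
    have key : ∀ i, Function.update (Function.update q b (q b - min (q b) (1 - q a))) a
        (q a + min (q b) (1 - q a)) i
        = q i + ((if i = a then min (q b) (1 - q a) else 0)
            - (if i = b then min (q b) (1 - q a) else 0)) := by
      intro i
      rcases eq_or_ne i a with rfl | hia
      · rw [Function.update_self]; simp [hba.symm]
      · rw [Function.update_of_ne hia]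
        rcases eq_or_ne i b with rfl | hib
        · rw [Function.update_self]; simp [hia]; ring
        · rw [Function.update_of_ne hib]; simp [hia, hib]
    simp only [key]
    rw [Finset.sum_add_distrib, Finset.sum_sub_distrib]
    simp
  case isFalse => rfl

lemma ppStep_mono {b a : Fin n} {q : Fin n → ℝ} (hq : PPBdd q) :
    ppStep n l u b q a b ≤ q b ∧ ∀ i, i ≠ b → q i ≤ ppStep n l u b q a i := by
  unfold ppStep
  split
  case isTrue h =>
    have hd0 : 0 ≤ min (q b) (1 - q a) := le_min (hq b).1 (by linarith [(hq a).2])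
    have hba : b ≠ a := ne_of_lt h.1
    constructor
    · rw [Function.update_of_ne hba, Function.update_self]; linarith
    · intro i hib
      rcases eq_or_ne i a with rfl | hia
      · rw [Function.update_self]; linarith
      · rw [Function.update_of_ne hia, Function.update_of_ne hib]
  case isFalse => exact ⟨le_refl _, fun i _ => le_refl _⟩

lemma ppStep_frozen {b a : Fin n} {q : Fin n → ℝ} (i : Fin n) (hib : i ≠ b)
    (hbi : ¬ b < i) : ppStep n l u b q a i = q i := by
  unfold ppStep
  split
  case isTrue h =>
    have hia : i ≠ a := fun hh => hbi (hh ▸ h.1)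
    rw [Function.update_of_ne hia, Function.update_of_ne hib]
  case isFalse => rfl

lemma ppStep_key {b a : Fin n} {q : Fin n → ℝ} (hq : PPBdd q)
    (h : b < a ∧ l a > u b) :
    ppStep n l u b q a a = 1 ∨ ppStep n l u b q a b = 0 := by
  have hba : b ≠ a := ne_of_lt h.1
  unfold ppStep
  rw [if_pos h]
  rcases le_total (q b) (1 - q a) with hle | hle
  · right
    rw [Function.update_of_ne hba, Function.update_self, min_eq_left hle]
    ring
  · left
    rw [Function.update_self, min_eq_right hle]
    ring

lemma ppStep_id {b a : Fin n} {q : Fin n → ℝ} (hq : PPBdd q)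
    (h1 : b < a → l a > u b → q a = 1) : ppStep n l u b q a = q := by
  unfold ppStep
  split
  case isTrue h =>
    have hqa : q a = 1 := h1 h.1 h.2
    have hmin : min (q b) (1 - q a) = 0 := by
      rw [hqa]; simp [(hq b).1]
    rw [hmin]
    simp
  case isFalse => rfl

/-! inner fold lemmas -/

lemma ppInner_bdd {b : Fin n} : ∀ (L : List (Fin n)) (q : Fin n → ℝ), PPBdd q →
    PPBdd (L.foldl (ppStep n l u b) q)
  | [], _, hq => hq
  | _ :: L, q, hq => ppInner_bdd L _ (ppStep_bdd hq)

lemma ppInner_sum {b : Fin n} : ∀ (L : List (Fin n)) (q : Fin n → ℝ),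
    ∑ i, L.foldl (ppStep n l u b) q i = ∑ i, q i
  | [], _ => rfl
  | a :: L, q => by
      rw [List.foldl_cons, ppInner_sum (b := b) L _]
      exact ppStep_sum

lemma ppInner_mono {b : Fin n} : ∀ (L : List (Fin n)) (q : Fin n → ℝ), PPBdd q →
    L.foldl (ppStep n l u b) q b ≤ q b ∧
      ∀ i, i ≠ b → q i ≤ L.foldl (ppStep n l u b) q i
  | [], _, _ => ⟨le_refl _, fun _ _ => le_refl _⟩
  | a :: L, q, hq => by
      simp only [List.foldl_cons]
      have h1 := ppStep_mono (l := l) (u := u) (b := b) (a := a) hq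
      have h2 := ppInner_mono (b := b) L (ppStep n l u b q a) (ppStep_bdd hq)
      exact ⟨le_trans h2.1 h1.1,
        fun i hi => le_trans (h1.2 i hi) (h2.2 i hi)⟩

lemma ppInner_frozen {b : Fin n} : ∀ (L : List (Fin n)) (q : Fin n → ℝ) (i : Fin n),
    i ≠ b → ¬ b < i → L.foldl (ppStep n l u b) q i = q i
  | [], _, _, _, _ => rfl
  | a :: L, q, i, hib, hbi => by
      rw [List.foldl_cons, ppInner_frozen (b := b) L _ i hib hbi,
        ppStep_frozen i hib hbi]

lemma ppInner_key {b : Fin n} : ∀ (L : List (Fin n)) (q : Fin n → ℝ), PPBdd q →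
    ∀ a ∈ L, b < a → l a > u b →
      (L.foldl (ppStep n l u b) q a = 1 ∨ L.foldl (ppStep n l u b) q b = 0)
  | [], _, _, a, ha => absurd ha List.not_mem_nil
  | a' :: L, q, hq, a, ha => by
      intro hba hla
      rw [List.foldl_cons]
      set q1 := ppStep n l u b q a' with hq1def
      have hq1 : PPBdd q1 := ppStep_bdd hq
      have hmono := ppInner_mono (l := l) (u := u) (b := b) L q1 hq1
      have hbdd := ppInner_bdd (l := l) (u := u) (b := b) L q1 hq1
      rcases List.mem_cons.mp ha with rfl | haL
      · rcases ppStep_key hq ⟨hba, hla⟩ with h1 | h0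
        · left
          have h2 := hmono.2 a (ne_of_lt hba).symm
          have h3 := (hbdd a).2
          rw [← hq1def] at h1
          linarith
        · right
          have h2 := hmono.1
          have h3 := (hbdd b).1
          rw [← hq1def] at h0
          linarith
      · exact ppInner_key (b := b) L q1 hq1 a haL hba hla

lemma ppInner_id {b : Fin n} : ∀ (L : List (Fin n)) (q : Fin n → ℝ), PPBdd q →
    (∀ a, b < a → l a > u b → q a = 1) → L.foldl (ppStep n l u b) q = q
  | [], _, _, _ => rfl
  | a :: L, q, hq, h1 => by
      rw [List.foldl_cons, ppStep_id hq (h1 a), ppInner_id (b := b) L q hq h1]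

/-! outer fold -/

lemma ppOuter (hvalid : ∀ i, l i ≤ u i) :
    ∀ (B : List (Fin n)), B.Pairwise (· < ·) →
    (∀ b c : Fin n, c ∈ B → c < b → b ∈ B) →
    ∀ q : Fin n → ℝ, PPBdd q → (∀ b, b ∉ B → PPGood l u q b) →
    PPBdd (B.foldl (fun q b => (List.finRange n).reverse.foldl (ppStep n l u b) q) q) ∧
    (∑ i, B.foldl (fun q b => (List.finRange n).reverse.foldl (ppStep n l u b) q) q i
        = ∑ i, q i) ∧
    (∀ b, PPGood l u
      (B.foldl (fun q b => (List.finRange n).reverse.foldl (ppStep n l u b) q) q) b)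
  | [], _, _, q, hq, hQ => ⟨hq, rfl, fun b => hQ b List.not_mem_nil⟩
  | b' :: B, hB, hup, q, hq, hQ => by
      rw [List.foldl_cons]
      set q1 := (List.finRange n).reverse.foldl (ppStep n l u b') q with hq1def
      have hq1 : PPBdd q1 := ppInner_bdd _ q hq
      have hBs := List.pairwise_cons.mp hB
      have hup' : ∀ b c : Fin n, c ∈ B → c < b → b ∈ B := by
        intro b c hc hcb
        rcases List.mem_cons.mp (hup b c (List.mem_cons_of_mem _ hc) hcb) with rfl | h
        · exact absurd (hBs.1 c hc) (not_lt.mpr hcb.le)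
        · exact h
      have hQ' : ∀ b, b ∉ B → PPGood l u q1 b := by
        intro b hbB
        rcases eq_or_ne b b' with rfl | hbb'
        · -- newly processed index
          intro a hba hla
          exact ppInner_key _ q hq a (by simp) hba hla
        · -- previously handled index; b ∉ b'::B
          have hbnB : b ∉ b' :: B := by
            simp only [List.mem_cons, not_or]; exact ⟨hbb', hbB⟩
          have hP : PPGood l u q b := hQ b hbnB
          have hbb : b < b' := by
            rcases lt_or_ge b b' with h | h
            · exact h
            · exact absurd
                (hup b b' (List.mem_cons_self (a := b') (l := B)) (lt_of_le_of_ne h (Ne.symm hbb')))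
                hbnB
          have hfrozen : q1 b = q b :=
            ppInner_frozen _ q b hbb' (not_lt.mpr hbb.le)
          intro a hba hla
          by_cases hqb : q b = 0
          · right; rw [hfrozen]; exact hqb
          · left
            have hall : ∀ a', b < a' → l a' > u b → q a' = 1 :=
              fun a' h1 h2 => (hP a' h1 h2).resolve_right hqb
            rcases eq_or_ne a b' with rfl | hab'
            · -- a = b': show the inner fold for b' did nothing
              have hid : q1 = q := by
                rw [hq1def]
                refine ppInner_id _ q hq ?_
                intro a'' h1 h2
                refine hall a'' (lt_trans hbb h1) ?_
                calc u b < l a := hla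
                  _ ≤ u a := hvalid a
                  _ < l a'' := h2
              rw [hid]
              exact hall a hba hla
            · have h1 : q a = 1 := hall a hba hla
              have h2 := (ppInner_mono (l := l) (u := u) (b := b') ((List.finRange n).reverse) q hq).2 a hab'
              have h3 := (hq1 a).2
              rw [hq1def] at *
              linarith
      have IH := ppOuter hvalid B hBs.2 hup' q1 hq1 hQ'
      refine ⟨IH.1, ?_, IH.2.2⟩
      rw [IH.2.1, hq1def, ppInner_sum]

end Aux

/-- if the intervals are indexed in increasing order of upper bound and
`p ∈ [0,1]^n`, then after post-processing, for every pair `(a, b)` with `ℓ_a > u_b`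
either `p_a = 1` or `p_b = 0`; moreover the total mass is preserved and all coordinates
remain in `[0,1]`. -/
theorem postprocess_expost (n : ℕ) (l u : Fin n → ℝ)
    (hvalid : ∀ i, l i ≤ u i)
    (hsorted : ∀ i j : Fin n, i ≤ j → u i ≤ u j)
    (p : Fin n → ℝ) (hp : ∀ i, 0 ≤ p i ∧ p i ≤ 1) :
    (∀ a b : Fin n, l a > u b →
      postprocess n l u p a = 1 ∨ postprocess n l u p b = 0) ∧
    (∑ i, postprocess n l u p i = ∑ i, p i) ∧
    (∀ i, 0 ≤ postprocess n l u p i ∧ postprocess n l u p i ≤ 1) := by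
  have hmain := ppOuter (l := l) (u := u) hvalid (List.finRange n)
    (List.pairwise_lt_finRange n)
    (fun b c _ _ => List.mem_finRange b)
    p hp
    (fun b hb => absurd (List.mem_finRange b) hb)
  rw [show (postprocess n l u p) = (List.finRange n).foldl
    (fun q b => (List.finRange n).reverse.foldl (ppStep n l u b) q) p from rfl]
  refine ⟨?_, hmain.2.1, hmain.1⟩
  intro a b hla
  have hba : b < a := by
    rcases lt_or_ge b a with h | h
    · exact h
    · exact absurd hla (not_lt.mpr ((hvalid a).trans (hsorted a b h)))
  exact hmain.2.2 b a hba hla
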